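/- Let q = p^r be a prime power and let D : (Z/qZ)^3 → F_p be given by D(x,y,z) = 1 if x + y + z = 0 in Z/qZ and 0 otherwise. Then the triangle rank of D over F_p is at most q. Concretely, D(x, y, z+1) = Σ_{a+b+c = q−1} C(x,a) C(y,b) C(z,c) in F_p, where C(·,k) : Z/qZ → F_p denotes the well-defined reduction of the binomial coefficient function m ↦ binomial(m,k). -/

import Mathlib

open Finset

/-- A slice term is a function of three variables that factors as a
function of two of the variables times a function of the remaining one. -/
def IsSliceTerm {X Y Z 𝔽 : Type*} [Field 𝔽] (t : X → Y → Z → 𝔽) : Prop :=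
  (∃ (f : X → Y → 𝔽) (g : Z → 𝔽), ∀ x y z, t x y z = f x y * g z) ∨
  (∃ (f : X → Z → 𝔽) (g : Y → 𝔽), ∀ x y z, t x y z = f x z * g y) ∨
  (∃ (f : Y → Z → 𝔽) (g : X → 𝔽), ∀ x y z, t x y z = f y z * g x)

/-- The slice rank of a function `X × Y × Z → 𝔽`: the least number of slice
terms needed to express it. -/
noncomputable def sliceRank {X Y Z 𝔽 : Type*} [Field 𝔽] (T : X → Y → Z → 𝔽) : ℕ :=
  sInf {k | ∃ t : Fin k → X → Y → Z → 𝔽,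
    (∀ i, IsSliceTerm (t i)) ∧ ∀ x y z, T x y z = ∑ i, t i x y z}

/-- The tensor rank of a function `X × Y × Z → 𝔽`. -/
noncomputable def tensorRank {X Y Z 𝔽 : Type*} [Field 𝔽] (T : X → Y → Z → 𝔽) : ℕ :=
  sInf {k | ∃ (f : Fin k → X → 𝔽) (g : Fin k → Y → 𝔽) (h : Fin k → Z → 𝔽),
    ∀ x y z, T x y z = ∑ i, f i x * g i y * h i z}

/-- The triangle rank of a function `X × Y × Z → 𝔽`. -/
noncomputable def triangleRank {X Y Z 𝔽 : Type*} [Field 𝔽] (T : X → Y → Z → 𝔽) : ℕ :=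
  sInf {k | ∃ (f : Fin k → X → 𝔽) (g : Fin k → Y → 𝔽) (h : Fin k → Z → 𝔽)
      (r : Fin k → Fin k → Fin k → 𝔽),
    ∀ x y z, T x y z = ∑ a : Fin k, ∑ b : Fin k, ∑ c : Fin k,
      if (a : ℕ) + (b : ℕ) + (c : ℕ) < k then r a b c * f a x * g b y * h c z else 0}

/-- Let `q = p^r` be a prime power and `D : (ℤ/qℤ)³ → 𝔽_p` the indicator of
`x + y + z = 0`. Then the triangle rank of `D` over `𝔽_p` is at most `q`.
Concretely, `D (x, y, z+1) = Σ_{a+b+c=q-1} C(x,a) C(y,b) C(z,c)` in `𝔽_p`,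
where `C (·, k) : ℤ/qℤ → 𝔽_p` is the reduction of `m ↦ binomial (m, k)`
(well defined by Lucas' theorem). -/
lemma choose_digit (p x : ℕ) (hx : x < p) :
    x.choose (p - 1) = if x = p - 1 then 1 else 0 := by
  split_ifs with h
  · rw [h, Nat.choose_self]
  · exact Nat.choose_eq_zero_of_lt (by omega)

lemma choose_pred_pow (p : ℕ) [hp : Fact p.Prime] (r N : ℕ) :
    ((N.choose (p ^ r - 1) : ℕ) : ZMod p) = if N % p ^ r = p ^ r - 1 then 1 else 0 := by
  induction r generalizing N with
  | zero => simp [Nat.mod_one]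
  | succ r ih =>
    have hp2 := hp.out.two_le
    have hQ : 0 < p ^ r := Nat.pow_pos (by omega)
    have hple : p ≤ p ^ (r + 1) := by
      calc p = p ^ 1 := (pow_one p).symm
      _ ≤ p ^ (r + 1) := Nat.pow_le_pow_right (by omega) (by omega)
    have hmul : p * (p ^ r - 1) = p ^ (r + 1) - p := by
      rw [Nat.mul_sub, mul_one, ← pow_succ']
    have e : p ^ (r + 1) - 1 = p * (p ^ r - 1) + (p - 1) := by omega
    have hval1 : (p ^ (r + 1) - 1) % p = p - 1 := by
      rw [e, Nat.mul_add_mod, Nat.mod_eq_of_lt (by omega)]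
    have hval2 : (p ^ (r + 1) - 1) / p = p ^ r - 1 := by
      rw [e, Nat.mul_add_div (by omega), Nat.div_eq_of_lt (by omega), add_zero]
    have hx : N % p ^ (r + 1) % p = N % p :=
      Nat.mod_mod_of_dvd N (dvd_pow_self p (by omega))
    have hy : N % p ^ (r + 1) / p = N / p % p ^ r := by
      rw [pow_succ']; exact Nat.mod_mul_right_div_self N p (p ^ r)
    have hM := Nat.div_add_mod (N % p ^ (r + 1)) p
    have hiff : N % p ^ (r + 1) = p ^ (r + 1) - 1 ↔
        (N % p = p - 1 ∧ N / p % p ^ r = p ^ r - 1) := by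
      constructor
      · intro h
        rw [← hx, ← hy, h, hval1, hval2]; exact ⟨rfl, rfl⟩
      · rintro ⟨h1, h2⟩
        rw [← hM, hx, hy, h1, h2, ← e]
    have key := (Choose.choose_modEq_choose_mod_mul_choose_div_nat
      (p := p) (n := N) (k := p ^ (r + 1) - 1))
    rw [← ZMod.natCast_eq_natCast_iff] at key
    rw [key, hval1, hval2]
    push_cast
    rw [ih (N / p), choose_digit p (N % p) (Nat.mod_lt N (by omega))]
    simp only [hiff]
    by_cases h1 : N % p = p - 1 <;> by_cases h2 : N / p % p ^ r = p ^ r - 1 <;>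
      simp [h1, h2]

lemma main_identity (p r : ℕ) [Fact p.Prime] (x y z : ZMod (p ^ r)) :
    (if x + y + (z + 1) = 0 then (1 : ZMod p) else 0) =
      ∑ ab ∈ Finset.HasAntidiagonal.antidiagonal (p ^ r - 1), ∑ bc ∈ Finset.HasAntidiagonal.antidiagonal ab.2,
        ((x.val.choose ab.1 : ZMod p) * (y.val.choose bc.1 : ZMod p) *
          (z.val.choose bc.2 : ZMod p)) := by
  have hp2 := (Fact.out : p.Prime).two_le
  have hq0 : 0 < p ^ r := Nat.pow_pos (by omega)
  haveI : NeZero (p ^ r) := ⟨by omega⟩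
  have hN : (((x.val + y.val + z.val).choose (p ^ r - 1) : ℕ) : ZMod p) =
      ∑ ab ∈ Finset.HasAntidiagonal.antidiagonal (p ^ r - 1), ∑ bc ∈ Finset.HasAntidiagonal.antidiagonal ab.2,
        ((x.val.choose ab.1 : ZMod p) * (y.val.choose bc.1 : ZMod p) *
          (z.val.choose bc.2 : ZMod p)) := by
    rw [add_assoc, Nat.add_choose_eq]
    push_cast
    refine Finset.sum_congr rfl fun ab _ => ?_
    rw [Nat.add_choose_eq]
    push_cast [Finset.mul_sum]
    refine Finset.sum_congr rfl fun bc _ => by ring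
  rw [← hN, choose_pred_pow]
  refine if_congr ?_ rfl rfl
  have hcast : ((x.val + y.val + z.val : ℕ) : ZMod (p ^ r)) = x + y + z := by
    push_cast
    rw [ZMod.natCast_rightInverse x, ZMod.natCast_rightInverse y,
      ZMod.natCast_rightInverse z]
  have hq1 : ((p ^ r - 1 : ℕ) : ZMod (p ^ r)) = -1 := by
    rw [Nat.cast_sub (by omega), Nat.cast_one, Nat.cast_pow, ← Nat.cast_pow,
      ZMod.natCast_self, zero_sub]
  have h1 : x + y + (z + 1) = 0 ↔ x + y + z = -1 :=
    ⟨fun h => by linear_combination h, fun h => by linear_combination h⟩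
  have h2 : ((x.val + y.val + z.val) % p ^ r = p ^ r - 1) ↔
      ((x.val + y.val + z.val : ℕ) : ZMod (p ^ r)) =
        ((p ^ r - 1 : ℕ) : ZMod (p ^ r)) := by
    rw [ZMod.natCast_eq_natCast_iff',
      Nat.mod_eq_of_lt (show p ^ r - 1 < p ^ r by omega)]
  rw [h1, h2, hcast, hq1]

lemma reindex (p q : ℕ) (hq0 : 0 < q) (F : ℕ → ℕ → ℕ → ZMod p) :
    ∑ ab ∈ Finset.HasAntidiagonal.antidiagonal (q - 1), ∑ bc ∈ Finset.HasAntidiagonal.antidiagonal ab.2,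
        F ab.1 bc.1 bc.2 =
      ∑ a ∈ range q, ∑ b ∈ range q, ∑ c ∈ range q,
        if a + b + c = q - 1 then F a b c else 0 := by
  rw [Finset.Nat.sum_antidiagonal_eq_sum_range_succ_mk,
    show (q - 1).succ = q from by omega]
  refine Finset.sum_congr rfl fun a ha => ?_
  rw [Finset.Nat.sum_antidiagonal_eq_sum_range_succ_mk]
  rw [Finset.mem_range] at ha
  have hinner : ∀ b, (∑ c ∈ range q, if a + b + c = q - 1 then F a b c else 0) =
      if a + b ≤ q - 1 then F a b (q - 1 - a - b) else 0 := by
    intro b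
    split_ifs with hb
    · rw [Finset.sum_eq_single (q - 1 - a - b)]
      · rw [if_pos (by omega)]
      · intro c _ hc; exact if_neg (by omega)
      · intro hc; exact absurd (Finset.mem_range.mpr (by omega)) hc
    · exact Finset.sum_eq_zero fun c _ => if_neg (by omega)
  simp only [hinner]
  rw [← Finset.sum_filter]
  have hfil : Finset.filter (fun b => a + b ≤ q - 1) (range q) =
      range (q - 1 - a + 1) := by
    ext b
    simp only [Finset.mem_filter, Finset.mem_range]
    omega
  rw [hfil]

theorem triangleRank_D_ZMod_prime_pow (p r q : ℕ) [Fact p.Prime]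
    (hq : q = p ^ r) (hr : 1 ≤ r) :
    (∀ x y z : ZMod q,
        (if x + y + (z + 1) = 0 then (1 : ZMod p) else 0) =
          ∑ ab ∈ Finset.HasAntidiagonal.antidiagonal (q - 1), ∑ bc ∈ Finset.HasAntidiagonal.antidiagonal ab.2,
            ((x.val.choose ab.1 : ZMod p) * (y.val.choose bc.1 : ZMod p) *
              (z.val.choose bc.2 : ZMod p))) ∧
    triangleRank (fun x y z : ZMod q => if x + y + z = 0 then (1 : ZMod p) else 0) ≤ q := by
  subst hq
  have hp2 := (Fact.out : p.Prime).two_le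
  have hq0 : 0 < p ^ r := Nat.pow_pos (by omega)
  refine ⟨fun x y z => main_identity p r x y z, ?_⟩
  unfold triangleRank
  apply Nat.sInf_le
  refine ⟨fun a x => (x.val.choose (a : ℕ) : ZMod p),
    fun b y => (y.val.choose (b : ℕ) : ZMod p),
    fun c z => ((z - 1).val.choose (c : ℕ) : ZMod p),
    fun a b c => if (a : ℕ) + (b : ℕ) + (c : ℕ) = p ^ r - 1 then 1 else 0, ?_⟩
  intro x y z
  have h1 := main_identity p r x y (z - 1)
  rw [sub_add_cancel] at h1
  show (if x + y + z = 0 then (1 : ZMod p) else 0) = _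
  rw [h1, reindex p (p ^ r) hq0
    (fun a b c => (x.val.choose a : ZMod p) * (y.val.choose b : ZMod p) *
      ((z - 1).val.choose c : ZMod p))]
  simp only [Finset.sum_range]
  refine Finset.sum_congr rfl fun a ha => ?_
  refine Finset.sum_congr rfl fun b hb => ?_
  refine Finset.sum_congr rfl fun c hc => ?_
  split_ifs with hA hB
  · ring
  · exfalso; omega
  · ring
  · rfl
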